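/- Let N = (V, A, c) be a network, y, z ∈ V distinct and X ⊆ V. Then δ^N_{yz}(X) ≥ λ^N_{yz}(X), and equality holds when X is a singleton. -/

import Mathlib

/-!
Networks on the complete digraph: capacities `c : V → V → ℕ` with no loops
(arcs are ordered pairs of distinct vertices; loops are given capacity 0).
-/

structure Network (V : Type*) where
  c : V → V → ℕ
  no_loop : ∀ v, c v v = 0

namespace NetFlow

variable {V : Type*} [Fintype V] [DecidableEq V]

/-- `f` is a flow from `y` to `z` in `N`. -/
def IsFlow (N : Network V) (y z : V) (f : V → V → ℕ) : Prop :=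
  (∀ u v, f u v ≤ N.c u v) ∧
  (∀ x, x ≠ y → x ≠ z → ∑ u, f u x = ∑ u, f x u)

/-- The value of a flow from `y`. -/
def flowValue (f : V → V → ℕ) (y : V) : ℤ :=
  (∑ u, (f y u : ℤ)) - ∑ u, (f u y : ℤ)

/-- The maximum flow value `φ^N_{yz}`. -/
noncomputable def maxFlowValue (N : Network V) (y z : V) : ℕ :=
  sSup {m : ℕ | ∃ f, IsFlow N y z f ∧ flowValue f y = (m : ℤ)}

/-- `f` is a maximum flow from `y` to `z` in `N`. -/
def IsMaxFlow (N : Network V) (y z : V) (f : V → V → ℕ) : Prop :=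
  IsFlow N y z f ∧ flowValue f y = (maxFlowValue N y z : ℤ)

/-- The network `N_X`: capacities of arcs incident to `X` are set to zero. -/
def removeVerts (N : Network V) (X : Finset V) : Network V where
  c u v := if u ∈ X ∨ v ∈ X then 0 else N.c u v
  no_loop v := by simp [N.no_loop v]

/-- `φ^N_{yz}(X) = φ^N_{yz} - φ^{N_X}_{yz}`. -/
noncomputable def phiDrop (N : Network V) (y z : V) (X : Finset V) : ℤ :=
  (maxFlowValue N y z : ℤ) - (maxFlowValue (removeVerts N X) y z : ℤ)

/-- The (consecutive) arcs of a list of vertices. -/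
def pathArcs (p : List V) : List (V × V) := p.zip p.tail

/-- `p` is a path from `y` to `z` in `N`: at least two distinct vertices, starting at `y`,
ending at `z`, with all consecutive arcs of positive capacity. -/
def IsPath (N : Network V) (y z : V) (p : List V) : Prop :=
  2 ≤ p.length ∧ p.Nodup ∧ p.head? = some y ∧ p.getLast? = some z ∧
    p.Chain' fun u v => 1 ≤ N.c u v

/-- `p` is a cycle in `N`. -/
def IsCycle (N : Network V) (p : List V) : Prop :=
  3 ≤ p.length ∧ p.dropLast.Nodup ∧ p.head? = p.getLast? ∧
    p.Chain' fun u v => 1 ≤ N.c u v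

/-- A sequence of arc-disjoint paths from `y` to `z` in `N`: each component is a path, and
each arc `a` is used by at most `c a` components. -/
def IsPathSeq (N : Network V) (y z : V) (γ : List (List V)) : Prop :=
  (∀ p ∈ γ, IsPath N y z p) ∧
  ∀ u v : V, γ.countP (fun p => decide ((u, v) ∈ pathArcs p)) ≤ N.c u v

/-- `λ^N_{yz}`: the maximum length of a sequence of arc-disjoint paths from `y` to `z`. -/
noncomputable def maxSeqLen (N : Network V) (y z : V) : ℕ :=
  sSup {m : ℕ | ∃ γ : List (List V), IsPathSeq N y z γ ∧ γ.length = m}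

/-- `M^N_{yz}`: the sequences of arc-disjoint paths from `y` to `z` of maximum length. -/
def MaxSeqs (N : Network V) (y z : V) : Set (List (List V)) :=
  {γ | IsPathSeq N y z γ ∧ γ.length = maxSeqLen N y z}

/-- `l_X(γ)`: the number of components of `γ` having a vertex in `X`. -/
def lX (X : Finset V) (γ : List (List V)) : ℕ :=
  γ.countP fun p => p.any fun x => decide (x ∈ X)

/-- `λ^N_{yz}(X)`: the minimum of `l_X` over maximum-length sequences of arc-disjoint paths. -/
noncomputable def lambdaX (N : Network V) (y z : V) (X : Finset V) : ℕ :=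
  sInf {n : ℕ | ∃ γ ∈ MaxSeqs N y z, lX X γ = n}

/-- The flow through a vertex: `f(x) = Σ_{a exiting x} f(a)` if `x ∉ {y,z}`, `v(f)` otherwise. -/
def vertexFlow (f : V → V → ℕ) (y z x : V) : ℤ :=
  if x = y ∨ x = z then flowValue f y else ∑ u, (f x u : ℤ)

/-- `δ^N_{yz}(X)`: the minimum of `f(X) = Σ_{x∈X} f(x)` over maximum flows `f`. -/
noncomputable def deltaX (N : Network V) (y z : V) (X : Finset V) : ℕ :=
  sInf {n : ℕ | ∃ f, IsMaxFlow N y z f ∧ (∑ x ∈ X, vertexFlow f y z x) = (n : ℤ)}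

/-- The flow `f_γ` associated with a sequence of arc-disjoint paths. -/
def seqFlow (γ : List (List V)) (u v : V) : ℕ :=
  γ.countP fun p => decide ((u, v) ∈ pathArcs p)

/-- The path (or cycle) function `χ_p` of a path or cycle `p`. -/
def chi (p : List V) (u v : V) : ℕ := (pathArcs p).count (u, v)

/-- `(γ, w)` is a decomposition of the flow `f`: `γ` is a sequence of `v(f)` paths from `y`
to `z`, `w` a sequence of cycles, and `f = Σ_j χ_{γ_j} + Σ_j χ_{w_j}`. -/
def IsDecomposition (N : Network V) (y z : V) (f : V → V → ℕ)
    (γ w : List (List V)) : Prop :=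
  (∀ p ∈ γ, IsPath N y z p) ∧ (∀ q ∈ w, IsCycle N q) ∧
  (γ.length : ℤ) = flowValue f y ∧
  ∀ u v : V, f u v = (γ.map fun p => chi p u v).sum + (w.map fun q => chi q u v).sum

/-- The forward arcs of a generalized path given by vertices `p` and directions `d`. -/
def forwardArcs (p : List V) (d : List Bool) : List (V × V) :=
  ((p.zip p.tail).zip d).filterMap fun e => if e.2 then some e.1 else none

/-- The backward arcs of a generalized path given by vertices `p` and directions `d`. -/
def backwardArcs (p : List V) (d : List Bool) : List (V × V) :=
  ((p.zip p.tail).zip d).filterMap fun e => if e.2 then none else some (e.1.2, e.1.1)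

/-- `(p, d)` is a generalized path from `y` to `z`: distinct vertices `x_1 = y, …, x_m = z`
(`m ≥ 2`), the `i`-th arc being `(x_i, x_{i+1})` (forward, `d_i = true`) or `(x_{i+1}, x_i)`
(backward, `d_i = false`). -/
def IsGenPath (y z : V) (p : List V) (d : List Bool) : Prop :=
  2 ≤ p.length ∧ p.Nodup ∧ p.head? = some y ∧ p.getLast? = some z ∧
    d.length + 1 = p.length

/-- `(p, d)` is an augmenting path for `f` from `y` to `z` in `N`. -/
def IsAugPath (N : Network V) (y z : V) (f : V → V → ℕ)
    (p : List V) (d : List Bool) : Prop :=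
  IsGenPath y z p d ∧
  (∀ a ∈ forwardArcs p d, f a.1 a.2 < N.c a.1 a.2) ∧
  (∀ a ∈ backwardArcs p d, 1 ≤ f a.1 a.2)

/-- `χ_σ` for a generalized path `σ = (p, d)`: `+1` on forward arcs, `-1` on backward arcs. -/
def chiGen (p : List V) (d : List Bool) (u v : V) : ℤ :=
  ((forwardArcs p d).count (u, v) : ℤ) - ((backwardArcs p d).count (u, v) : ℤ)

/-- The full flow vitality group centrality measure `φ^N(X)`. -/
noncomputable def phiGC (N : Network V) (X : Finset V) : ℝ :=
  ∑ a ∈ Finset.univ.filter (fun a : V × V => a.1 ≠ a.2 ∧ 0 < maxFlowValue N a.1 a.2),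
    (phiDrop N a.1 a.2 X : ℝ) / (maxFlowValue N a.1 a.2 : ℝ)

/-- The full flow betweenness group centrality measure `λ^N(X)`. -/
noncomputable def lambdaGC (N : Network V) (X : Finset V) : ℝ :=
  ∑ a ∈ Finset.univ.filter (fun a : V × V => a.1 ≠ a.2 ∧ 0 < maxFlowValue N a.1 a.2),
    (lambdaX N a.1 a.2 X : ℝ) / (maxFlowValue N a.1 a.2 : ℝ)

end NetFlow
set_option linter.unusedSectionVars false

namespace NetFlow

variable {V : Type*} [Fintype V] [DecidableEq V]

/-! ### List counting toolkit -/

lemma countP_eq_sum_map {α : Type*} (l : List α) (q : α → Bool) :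
    l.countP q = (l.map fun a => if q a then 1 else 0).sum := by
  induction l with
  | nil => simp
  | cons a t ih => simp [List.countP_cons, ih]; omega

lemma sum_finset_listmap {α β : Type*} (s : Finset α) (l : List β) (f : α → β → ℕ) :
    ∑ a ∈ s, (l.map (f a)).sum = (l.map fun b => ∑ a ∈ s, f a b).sum := by
  induction l with
  | nil => simp
  | cons b t ih => simp [Finset.sum_add_distrib, ih]

/-! ### pathArcs facts -/

lemma pathArcs_cons_cons (a b : V) (t : List V) :
    pathArcs (a :: b :: t) = (a, b) :: pathArcs (b :: t) := rfl

lemma fst_mem_of_mem_pathArcs {p : List V} {u v : V} (h : (u, v) ∈ pathArcs p) : u ∈ p :=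
  (List.of_mem_zip h).1

lemma snd_mem_tail_of_mem_pathArcs {p : List V} {u v : V} (h : (u, v) ∈ pathArcs p) :
    v ∈ p.tail :=
  (List.of_mem_zip h).2

lemma nodup_pathArcs {p : List V} (hp : p.Nodup) : (pathArcs p).Nodup := by
  induction p with
  | nil => simp [pathArcs]
  | cons a t ih =>
    match t with
    | [] => simp [pathArcs]
    | b :: t' =>
      rw [pathArcs_cons_cons]
      refine List.nodup_cons.2 ⟨fun hmem => ?_, ih (List.nodup_cons.1 hp).2⟩
      exact (List.nodup_cons.1 hp).1 (fst_mem_of_mem_pathArcs hmem)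

def outdeg (p : List V) (x : V) : ℕ := (pathArcs p).countP (fun a => decide (a.1 = x))
def indeg (p : List V) (x : V) : ℕ := (pathArcs p).countP (fun a => decide (a.2 = x))

lemma outdeg_eq (p : List V) (hp : p.Nodup) (x : V) :
    outdeg p x = if x ∈ p.dropLast then 1 else 0 := by
  induction p with
  | nil => simp [outdeg, pathArcs]
  | cons a t ih =>
    match t with
    | [] => simp [outdeg, pathArcs]
    | b :: t' =>
      have ha : a ∉ b :: t' := (List.nodup_cons.1 hp).1
      have ih' := ih (List.nodup_cons.1 hp).2
      unfold outdeg at ih' ⊢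
      rw [pathArcs_cons_cons, List.countP_cons]
      simp only [List.dropLast_cons₂]
      by_cases hxa : x = a
      · subst hxa
        have : x ∉ (b :: t').dropLast := fun hm => ha (List.dropLast_subset _ hm)
        simp [ih', this]
      · simp [ih', hxa, Ne.symm hxa]

lemma indeg_eq (p : List V) (hp : p.Nodup) (x : V) :
    indeg p x = if x ∈ p.tail then 1 else 0 := by
  induction p with
  | nil => simp [indeg, pathArcs]
  | cons a t ih =>
    match t with
    | [] => simp [indeg, pathArcs]
    | b :: t' =>
      have hb : b ∉ t' := (List.nodup_cons.1 (List.nodup_cons.1 hp).2).1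
      have ih' := ih (List.nodup_cons.1 hp).2
      unfold indeg at ih' ⊢
      rw [pathArcs_cons_cons, List.countP_cons]
      simp only [List.tail_cons] at ih' ⊢
      by_cases hxb : x = b
      · subst hxb
        simp [ih', hb]
      · simp [ih', hxb, Ne.symm hxb, List.mem_cons]
        split_ifs <;> simp_all

lemma sum_count_fst (l : List (V × V)) (x : V) :
    ∑ v : V, l.count (x, v) = l.countP (fun a => decide (a.1 = x)) := by
  induction l with
  | nil => simp
  | cons a t ih =>
    rw [List.countP_cons]
    simp only [List.count_cons]
    rw [Finset.sum_add_distrib, ih]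
    congr 1
    rcases a with ⟨a1, a2⟩
    by_cases h : a1 = x
    · subst h
      simp [Prod.ext_iff]
    · simp [Prod.ext_iff, h, Ne.symm h]

lemma sum_count_snd (l : List (V × V)) (x : V) :
    ∑ u : V, l.count (u, x) = l.countP (fun a => decide (a.2 = x)) := by
  induction l with
  | nil => simp
  | cons a t ih =>
    rw [List.countP_cons]
    simp only [List.count_cons]
    rw [Finset.sum_add_distrib, ih]
    congr 1
    rcases a with ⟨a1, a2⟩
    by_cases h : a2 = x
    · subst h
      simp [Prod.ext_iff]
    · simp [Prod.ext_iff, h, Ne.symm h]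

end NetFlow
namespace NetFlow

variable {V : Type*} [Fintype V] [DecidableEq V]

/-! ### Membership facts for paths -/

lemma mem_dropLast_iff {p : List V} {z x : V} (hl : p.getLast? = some z) (hx : x ≠ z) :
    x ∈ p.dropLast ↔ x ∈ p := by
  obtain ⟨q, rfl⟩ := List.getLast?_eq_some_iff.1 hl
  rw [List.dropLast_concat]
  simp [hx]

lemma mem_tail_iff {p : List V} {y x : V} (hh : p.head? = some y) (hx : x ≠ y) :
    x ∈ p.tail ↔ x ∈ p := by
  obtain ⟨q, rfl⟩ := List.head?_eq_some_iff.1 hh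
  simp [hx]

lemma head_mem_dropLast {p : List V} {y : V} (hh : p.head? = some y) (hlen : 2 ≤ p.length) :
    y ∈ p.dropLast := by
  obtain ⟨q, rfl⟩ := List.head?_eq_some_iff.1 hh
  match q with
  | [] => simp at hlen
  | b :: t => simp [List.dropLast_cons₂]

lemma head_not_mem_tail {p : List V} {y : V} (hh : p.head? = some y) (hnd : p.Nodup) :
    y ∉ p.tail := by
  obtain ⟨q, rfl⟩ := List.head?_eq_some_iff.1 hh
  exact (List.nodup_cons.1 hnd).1

lemma last_mem_tail {p : List V} {y z : V} (hh : p.head? = some y) (hl : p.getLast? = some z)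
    (hyz : y ≠ z) : z ∈ p.tail := by
  rw [mem_tail_iff hh (Ne.symm hyz)]
  obtain ⟨q, rfl⟩ := List.getLast?_eq_some_iff.1 hl
  simp

lemma last_not_mem_dropLast {p : List V} {z : V} (hl : p.getLast? = some z) (hnd : p.Nodup) :
    z ∉ p.dropLast := by
  obtain ⟨q, rfl⟩ := List.getLast?_eq_some_iff.1 hl
  rw [List.dropLast_concat]
  intro hz
  exact (List.nodup_append.1 hnd).2.2 z hz z (by simp) rfl

lemma head_mem {p : List V} {y : V} (hh : p.head? = some y) : y ∈ p := by
  obtain ⟨q, rfl⟩ := List.head?_eq_some_iff.1 hh; simp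

lemma last_mem {p : List V} {z : V} (hl : p.getLast? = some z) : z ∈ p := by
  obtain ⟨q, rfl⟩ := List.getLast?_eq_some_iff.1 hl; simp

/-! ### degrees of a path -/

lemma indeg_path {N : Network V} {y z : V} {p : List V} (hp : IsPath N y z p) (x : V)
    (hxy : x ≠ y) : indeg p x = if x ∈ p then 1 else 0 := by
  rw [indeg_eq p hp.2.1]
  simp only [mem_tail_iff hp.2.2.1 hxy]

lemma outdeg_path {N : Network V} {y z : V} {p : List V} (hp : IsPath N y z p) (x : V)
    (hxz : x ≠ z) : outdeg p x = if x ∈ p then 1 else 0 := by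
  rw [outdeg_eq p hp.2.1]
  simp only [mem_dropLast_iff hp.2.2.2.1 hxz]

lemma outdeg_path_y {N : Network V} {y z : V} {p : List V} (hp : IsPath N y z p) :
    outdeg p y = 1 := by
  rw [outdeg_eq p hp.2.1, if_pos (head_mem_dropLast hp.2.2.1 hp.1)]

lemma indeg_path_y {N : Network V} {y z : V} {p : List V} (hp : IsPath N y z p) :
    indeg p y = 0 := by
  rw [indeg_eq p hp.2.1, if_neg (head_not_mem_tail hp.2.2.1 hp.2.1)]

/-! ### seqFlow as a sum over paths -/

lemma count_pair_nodup (l : List (V × V)) (h : l.Nodup) (a : V × V) :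
    l.count a = if a ∈ l then 1 else 0 := by
  induction l with
  | nil => simp
  | cons b t ih =>
    rw [List.count_cons]
    rcases List.nodup_cons.1 h with ⟨hb, ht⟩
    by_cases hab : a = b
    · subst hab; simp [ih ht, hb]
    · simp [ih ht, hab, Ne.symm hab]

lemma sum_seqFlow_out (γ : List (List V)) (hnd : ∀ p ∈ γ, p.Nodup) (x : V) :
    ∑ u : V, seqFlow γ x u = (γ.map fun p => outdeg p x).sum := by
  have h1 : ∀ u, seqFlow γ x u = (γ.map fun p => (pathArcs p).count (x, u)).sum := by
    intro u
    rw [seqFlow, countP_eq_sum_map]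
    congr 1
    refine List.map_congr_left fun p hp => ?_
    rw [count_pair_nodup _ (nodup_pathArcs (hnd p hp))]
    simp
  simp only [h1]
  rw [sum_finset_listmap]
  congr 1
  exact List.map_congr_left fun p _ => sum_count_fst _ x

lemma sum_seqFlow_in (γ : List (List V)) (hnd : ∀ p ∈ γ, p.Nodup) (x : V) :
    ∑ u : V, seqFlow γ u x = (γ.map fun p => indeg p x).sum := by
  have h1 : ∀ u, seqFlow γ u x = (γ.map fun p => (pathArcs p).count (u, x)).sum := by
    intro u
    rw [seqFlow, countP_eq_sum_map]
    congr 1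
    refine List.map_congr_left fun p hp => ?_
    rw [count_pair_nodup _ (nodup_pathArcs (hnd p hp))]
    simp
  simp only [h1]
  rw [sum_finset_listmap]
  congr 1
  exact List.map_congr_left fun p _ => sum_count_snd _ x

lemma isFlow_seqFlow {N : Network V} {y z : V} {γ : List (List V)}
    (h : IsPathSeq N y z γ) : IsFlow N y z (seqFlow γ) := by
  have hnd : ∀ p ∈ γ, p.Nodup := fun p hp => (h.1 p hp).2.1
  refine ⟨fun u v => h.2 u v, fun x hxy hxz => ?_⟩
  rw [sum_seqFlow_out γ hnd x, sum_seqFlow_in γ hnd x]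
  congr 1
  refine List.map_congr_left fun p hp => ?_
  rw [indeg_path (h.1 p hp) x hxy, outdeg_path (h.1 p hp) x hxz]

lemma flowValue_seqFlow {N : Network V} {y z : V} {γ : List (List V)}
    (h : IsPathSeq N y z γ) : flowValue (seqFlow γ) y = (γ.length : ℤ) := by
  have hnd : ∀ p ∈ γ, p.Nodup := fun p hp => (h.1 p hp).2.1
  have hout : ∑ u : V, seqFlow γ y u = γ.length := by
    rw [sum_seqFlow_out γ hnd y]
    have : γ.map (fun p => outdeg p y) = γ.map fun _ => 1 :=
      List.map_congr_left fun p hp => outdeg_path_y (h.1 p hp)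
    simp [this]
  have hin : ∑ u : V, seqFlow γ u y = 0 := by
    rw [sum_seqFlow_in γ hnd y]
    have : γ.map (fun p => indeg p y) = γ.map fun _ => 0 :=
      List.map_congr_left fun p hp => indeg_path_y (h.1 p hp)
    simp [this]
  have h1 : (∑ u : V, (seqFlow γ y u : ℤ)) = (γ.length : ℤ) := by
    rw [← Nat.cast_sum, hout]
  have h2 : (∑ u : V, (seqFlow γ u y : ℤ)) = 0 := by
    rw [← Nat.cast_sum, hin]; simp
  rw [flowValue, h1, h2, sub_zero]

end NetFlow
namespace NetFlow

variable {V : Type*} [Fintype V] [DecidableEq V]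

lemma flowValue_le_cap {N : Network V} {y z : V} {f : V → V → ℕ} (hf : IsFlow N y z f) :
    flowValue f y ≤ ((∑ u : V, N.c y u : ℕ) : ℤ) := by
  rw [flowValue]
  have h1 : (∑ u : V, (f y u : ℤ)) ≤ ((∑ u : V, N.c y u : ℕ) : ℤ) := by
    rw [Nat.cast_sum]
    exact Finset.sum_le_sum fun u _ => by exact_mod_cast hf.1 y u
  have h2 : (0 : ℤ) ≤ ∑ u : V, (f u y : ℤ) :=
    Finset.sum_nonneg fun u _ => by positivity
  omega

lemma exists_isMaxFlow (N : Network V) (y z : V) : ∃ f, IsMaxFlow N y z f := by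
  have hne : (0 : ℕ) ∈ {m : ℕ | ∃ f, IsFlow N y z f ∧ flowValue f y = (m : ℤ)} := by
    refine ⟨fun _ _ => 0, ⟨fun u v => Nat.zero_le _, fun x _ _ => rfl⟩, ?_⟩
    simp [flowValue]
  have hbdd : BddAbove {m : ℕ | ∃ f, IsFlow N y z f ∧ flowValue f y = (m : ℤ)} := by
    refine ⟨∑ u : V, N.c y u, fun m hm => ?_⟩
    obtain ⟨f, hf, hval⟩ := hm
    have := flowValue_le_cap hf
    rw [hval] at this
    exact_mod_cast this
  have := Nat.sSup_mem ⟨0, hne⟩ hbdd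
  obtain ⟨f, hf, hval⟩ := this
  exact ⟨f, hf, hval⟩

lemma isPathSeq_nil (N : Network V) (y z : V) : IsPathSeq N y z ([] : List (List V)) :=
  ⟨fun p hp => absurd hp List.not_mem_nil, fun u v => by simp⟩

lemma exists_mem_maxSeqs (N : Network V) (y z : V) : ∃ γ, γ ∈ MaxSeqs N y z := by
  have hne : (0 : ℕ) ∈ {m : ℕ | ∃ γ : List (List V), IsPathSeq N y z γ ∧ γ.length = m} :=
    ⟨[], isPathSeq_nil N y z, rfl⟩
  have hbdd : BddAbove {m : ℕ | ∃ γ : List (List V), IsPathSeq N y z γ ∧ γ.length = m} := by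
    refine ⟨∑ u : V, N.c y u, fun m hm => ?_⟩
    obtain ⟨γ, hγ, rfl⟩ := hm
    have h1 := flowValue_seqFlow hγ
    have h2 := flowValue_le_cap (isFlow_seqFlow hγ)
    rw [h1] at h2
    exact_mod_cast h2
  have := Nat.sSup_mem ⟨0, hne⟩ hbdd
  obtain ⟨γ, hγ, hlen⟩ := this
  exact ⟨γ, hγ, hlen⟩

end NetFlow
namespace NetFlow

variable {V : Type*} [Fintype V] [DecidableEq V]

/-! ### Reachability: if the flow value is positive, `z` is reachable from `y` -/

lemma reach_z {N : Network V} {y z : V} {f : V → V → ℕ} (hf : IsFlow N y z f)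
    (hpos : 1 ≤ flowValue f y) :
    Relation.ReflTransGen (fun a b => 1 ≤ f a b) y z := by
  classical
  by_contra hnz
  set r : V → V → Prop := fun a b => 1 ≤ f a b with hr
  set R : Finset V := Finset.univ.filter (fun v => Relation.ReflTransGen r y v) with hR
  have hyR : y ∈ R := by simp [hR]; exact Relation.ReflTransGen.refl
  have hzR : z ∉ R := by simp [hR]; exact hnz
  have hclosed : ∀ x ∈ R, ∀ u, 1 ≤ f x u → u ∈ R := by
    intro x hx u hfu
    simp only [hR, Finset.mem_filter, Finset.mem_univ, true_and] at hx ⊢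
    exact hx.tail hfu
  have hS1 : ∑ x ∈ R, ((∑ u : V, (f x u : ℤ)) - ∑ u : V, (f u x : ℤ)) = flowValue f y := by
    rw [Finset.sum_eq_single_of_mem y hyR]
    · rfl
    · intro x hx hxy
      have hxz : x ≠ z := fun h => hzR (h ▸ hx)
      have := congrArg (fun n : ℕ => (n : ℤ)) (hf.2 x hxy hxz)
      push_cast at this
      omega
  have hzero : ∀ x ∈ R, ∀ u ∈ Rᶜ, (f x u : ℤ) = 0 := by
    intro x hx u hu
    rw [Finset.mem_compl] at hu
    have : ¬ 1 ≤ f x u := fun h => hu (hclosed x hx u h)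
    omega
  have hsplit1 : ∀ x ∈ R, ∑ u : V, (f x u : ℤ) = ∑ u ∈ R, (f x u : ℤ) := by
    intro x hx
    rw [← Finset.sum_add_sum_compl R (fun u => (f x u : ℤ)),
      Finset.sum_eq_zero (hzero x hx), add_zero]
  have hsplit2 : ∀ x ∈ R, ∑ u : V, (f u x : ℤ) =
      ∑ u ∈ R, (f u x : ℤ) + ∑ u ∈ Rᶜ, (f u x : ℤ) := fun x _ =>
    (Finset.sum_add_sum_compl R (fun u => (f u x : ℤ))).symm
  have hcomm : ∑ x ∈ R, ∑ u ∈ R, (f x u : ℤ) = ∑ x ∈ R, ∑ u ∈ R, (f u x : ℤ) :=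
    Finset.sum_comm
  have hS2 : ∑ x ∈ R, ((∑ u : V, (f x u : ℤ)) - ∑ u : V, (f u x : ℤ)) =
      - ∑ x ∈ R, ∑ u ∈ Rᶜ, (f u x : ℤ) := by
    rw [Finset.sum_sub_distrib, Finset.sum_congr rfl hsplit1, Finset.sum_congr rfl hsplit2,
      Finset.sum_add_distrib, hcomm]
    ring
  have hnonneg : 0 ≤ ∑ x ∈ R, ∑ u ∈ Rᶜ, (f u x : ℤ) :=
    Finset.sum_nonneg fun x _ => Finset.sum_nonneg fun u _ => by positivity
  rw [hS2] at hS1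
  omega

/-! ### Extracting a nodup walk -/

lemma exists_nodup_walk_aux {r : V → V → Prop} :
    ∀ n (q : List V), q.length ≤ n → q.Chain' r → ∀ y z, q.head? = some y →
      q.getLast? = some z →
      ∃ p : List V, p.Chain' r ∧ p.head? = some y ∧ p.getLast? = some z ∧ p.Nodup ∧
        ∀ x ∈ p, x ∈ q := by
  intro n
  induction n with
  | zero =>
    intro q hq _ y z hh _
    obtain ⟨t, rfl⟩ := List.head?_eq_some_iff.1 hh
    simp at hq
  | succ n ih =>
    intro q hq hc y z hh hl
    obtain ⟨t, rfl⟩ := List.head?_eq_some_iff.1 hh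
    match t with
    | [] =>
      refine ⟨[y], List.isChain_singleton y, by simp, by simpa using hl, by simp, by simp⟩
    | u :: t' =>
      have htl : (u :: t').getLast? = some z := by
        rwa [List.getLast?_cons_cons] at hl
      have hct : (u :: t').Chain' r := hc.tail
      have hr_yu : r y u := (List.isChain_cons_cons.1 hc).1
      by_cases hy : y ∈ u :: t'
      · obtain ⟨t1, t2, het⟩ := List.append_of_mem hy
        have hsuf : (y :: t2) <:+ (u :: t') := ⟨t1, het.symm⟩
        have hchain : (y :: t2).Chain' r := hct.suffix hsuf
        have hlast : (y :: t2).getLast? = some z := by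
          rw [het, List.getLast?_append_of_ne_nil t1 (by simp)] at htl
          exact htl
        have hlen : (y :: t2).length ≤ n := by
          have h1 := congrArg List.length het
          simp only [List.length_cons, List.length_append] at h1
          simp only [List.length_cons] at hq ⊢
          omega
        obtain ⟨p, hpc, hph, hpl, hpn, hps⟩ := ih (y :: t2) hlen hchain y z rfl hlast
        exact ⟨p, hpc, hph, hpl, hpn, fun x hx => List.mem_cons_of_mem y
          (hsuf.subset (hps x hx))⟩
      · have hlen : (u :: t').length ≤ n := by simpa using hq
        obtain ⟨p, hpc, hph, hpl, hpn, hps⟩ := ih (u :: t') hlen hct u z rfl htl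
        obtain ⟨rest, rfl⟩ := List.head?_eq_some_iff.1 hph
        refine ⟨y :: u :: rest, List.isChain_cons_cons.2 ⟨hr_yu, hpc⟩, rfl, ?_, ?_, ?_⟩
        · rwa [List.getLast?_cons_cons]
        · exact List.nodup_cons.2 ⟨fun h => hy (hps y h), hpn⟩
        · intro x hx
          rcases List.mem_cons.1 hx with rfl | hx
          · exact List.mem_cons_self
          · exact List.mem_cons_of_mem y (hps x hx)

lemma exists_nodup_path {r : V → V → Prop} {y z : V} (h : Relation.ReflTransGen r y z)
    (hyz : y ≠ z) :
    ∃ p : List V, 2 ≤ p.length ∧ p.Nodup ∧ p.head? = some y ∧ p.getLast? = some z ∧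
      p.Chain' r := by
  obtain ⟨l, hchain, hlast⟩ := List.exists_isChain_cons_of_relationReflTransGen h
  have hc' : (y :: l).Chain' r := hchain
  have hl' : (y :: l).getLast? = some z := by
    rw [List.getLast?_eq_getLast (List.cons_ne_nil y l), hlast]
  obtain ⟨p, hpc, hph, hpl, hpn, _⟩ :=
    exists_nodup_walk_aux (y :: l).length (y :: l) le_rfl hc' y z rfl hl'
  obtain ⟨t, rfl⟩ := List.head?_eq_some_iff.1 hph
  match t with
  | [] => simp at hpl; exact absurd hpl hyz
  | b :: t' => exact ⟨y :: b :: t', by simp, hpn, rfl, hpl, hpc⟩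

/-! ### Arcs of a chain -/

lemma mem_pathArcs_chain' {r : V → V → Prop} {p : List V} (hc : p.Chain' r) :
    ∀ a ∈ pathArcs p, r a.1 a.2 := by
  induction p with
  | nil => simp [pathArcs]
  | cons a t ih =>
    match t with
    | [] => simp [pathArcs]
    | b :: t' =>
      intro e he
      rw [pathArcs_cons_cons] at he
      rcases List.mem_cons.1 he with rfl | he
      · exact (List.isChain_cons_cons.1 hc).1
      · exact ih (List.isChain_cons_cons.1 hc).2 e he

/-! ### Flow decomposition into paths -/

lemma exists_pathSeq_of_flow {N : Network V} {y z : V} (hyz : y ≠ z) :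
    ∀ (k : ℕ) (f : V → V → ℕ), IsFlow N y z f → flowValue f y = (k : ℤ) →
      ∃ γ : List (List V), γ.length = k ∧ (∀ p ∈ γ, IsPath N y z p) ∧
        ∀ u v, seqFlow γ u v ≤ f u v := by
  intro k
  induction k with
  | zero =>
    intro f hf hv
    exact ⟨[], rfl, by simp, fun u v => by simp [seqFlow]⟩
  | succ k ih =>
    intro f hf hv
    have hreach := reach_z hf (by rw [hv]; exact_mod_cast Nat.succ_le_succ (Nat.zero_le k))
    obtain ⟨p, hlen2, hnd, hh, hl, hchain⟩ := exists_nodup_path hreach hyz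
    have harc : ∀ a ∈ pathArcs p, 1 ≤ f a.1 a.2 := mem_pathArcs_chain' hchain
    have hpath : IsPath N y z p :=
      ⟨hlen2, hnd, hh, hl, hchain.imp fun u v h => le_trans h (hf.1 u v)⟩
    set g : V → V → ℕ := fun u v => f u v - (pathArcs p).count (u, v) with hg
    have hcount_le : ∀ u v, (pathArcs p).count (u, v) ≤ f u v := by
      intro u v
      rw [count_pair_nodup _ (nodup_pathArcs hnd)]
      split
      · exact harc (u, v) ‹_›
      · exact Nat.zero_le _
    have hgZ : ∀ u v, (g u v : ℤ) = (f u v : ℤ) - ((pathArcs p).count (u, v) : ℤ) := by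
      intro u v
      simp only [hg]
      exact Nat.cast_sub (hcount_le u v)
    have hout : ∀ x : V, ∑ u : V, ((pathArcs p).count (x, u) : ℤ) = (outdeg p x : ℤ) := by
      intro x
      rw [← Nat.cast_sum, sum_count_fst]
      rfl
    have hin : ∀ x : V, ∑ u : V, ((pathArcs p).count (u, x) : ℤ) = (indeg p x : ℤ) := by
      intro x
      rw [← Nat.cast_sum, sum_count_snd]
      rfl
    have hgflow : IsFlow N y z g := by
      refine ⟨fun u v => le_trans (Nat.sub_le _ _) (hf.1 u v), fun x hxy hxz => ?_⟩
      have hZ : (∑ u : V, (g u x : ℤ)) = ∑ u : V, (g x u : ℤ) := by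
        simp only [hgZ]
        rw [Finset.sum_sub_distrib, Finset.sum_sub_distrib, hout, hin]
        have hcons := congrArg (fun n : ℕ => (n : ℤ)) (hf.2 x hxy hxz)
        push_cast at hcons
        have hdeg : (indeg p x : ℤ) = (outdeg p x : ℤ) := by
          rw [indeg_path hpath x hxy, outdeg_path hpath x hxz]
        rw [hcons, hdeg]
      have : ((∑ u : V, g u x : ℕ) : ℤ) = ((∑ u : V, g x u : ℕ) : ℤ) := by
        push_cast
        exact hZ
      exact_mod_cast this
    have hgval : flowValue g y = (k : ℤ) := by
      have hv' : (∑ u : V, (f y u : ℤ)) - ∑ u : V, (f u y : ℤ) = (k : ℤ) + 1 := by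
        have := hv
        rw [flowValue] at this
        push_cast at this ⊢
        omega
      rw [flowValue]
      simp only [hgZ]
      rw [Finset.sum_sub_distrib, Finset.sum_sub_distrib, hout, hin,
        outdeg_path_y hpath, indeg_path_y hpath]
      push_cast
      omega
    obtain ⟨γ', hlen', hpaths', hle'⟩ := ih g hgflow hgval
    refine ⟨p :: γ', by simp [hlen'], ?_, ?_⟩
    · intro q hq
      rcases List.mem_cons.1 hq with rfl | hq
      · exact hpath
      · exact hpaths' q hq
    · intro u v
      have h1 : seqFlow γ' u v ≤ g u v := hle' u v
      simp only [hg] at h1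
      have h2 := hcount_le u v
      rw [seqFlow, List.countP_cons]
      have hsg : List.countP (fun q => decide ((u, v) ∈ pathArcs q)) γ' = seqFlow γ' u v := rfl
      by_cases hm : (u, v) ∈ pathArcs p
      · have hc1 : (pathArcs p).count (u, v) = 1 := by
          rw [count_pair_nodup _ (nodup_pathArcs hnd), if_pos hm]
        rw [if_pos (by simp [hm])]
        omega
      · rw [if_neg (by simp [hm])]
        omega

end NetFlow
namespace NetFlow

variable {V : Type*} [Fintype V] [DecidableEq V]

lemma maxFlow_eq_maxSeqLen (N : Network V) (y z : V) (hyz : y ≠ z) :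
    maxFlowValue N y z = maxSeqLen N y z := by
  have hbddF : BddAbove {m : ℕ | ∃ f, IsFlow N y z f ∧ flowValue f y = (m : ℤ)} := by
    refine ⟨∑ u : V, N.c y u, fun m hm => ?_⟩
    obtain ⟨f, hf, hval⟩ := hm
    have := flowValue_le_cap hf
    rw [hval] at this
    exact_mod_cast this
  have hbddT : BddAbove {m : ℕ | ∃ γ : List (List V), IsPathSeq N y z γ ∧ γ.length = m} := by
    refine ⟨∑ u : V, N.c y u, fun m hm => ?_⟩
    obtain ⟨γ, hγ, rfl⟩ := hm
    have h2 := flowValue_le_cap (isFlow_seqFlow hγ)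
    rw [flowValue_seqFlow hγ] at h2
    exact_mod_cast h2
  apply le_antisymm
  · obtain ⟨f, hf⟩ := exists_isMaxFlow N y z
    obtain ⟨γ, hlen, hpaths, hle⟩ := exists_pathSeq_of_flow hyz (maxFlowValue N y z) f hf.1 hf.2
    have hps : IsPathSeq N y z γ := ⟨hpaths, fun u v => le_trans (hle u v) (hf.1.1 u v)⟩
    rw [maxSeqLen]
    exact le_csSup hbddT ⟨γ, hps, hlen⟩
  · obtain ⟨γ, hγ⟩ := exists_mem_maxSeqs N y z
    have hv := flowValue_seqFlow hγ.1
    rw [hγ.2] at hv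
    rw [maxFlowValue]
    exact le_csSup hbddF ⟨seqFlow γ, isFlow_seqFlow hγ.1, hv⟩

lemma main_aux (N : Network V) (y z : V) (hyz : y ≠ z) (X : Finset V) :
    lambdaX N y z X ≤ deltaX N y z X ∧
      ∀ x : V, X = {x} → deltaX N y z X = lambdaX N y z X := by
  classical
  have hvnonneg : ∀ (f : V → V → ℕ), IsMaxFlow N y z f → ∀ x, 0 ≤ vertexFlow f y z x := by
    intro f hf x
    rw [vertexFlow]
    split
    · rw [hf.2]; positivity
    · positivity
  have main1 : ∀ Y : Finset V, lambdaX N y z Y ≤ deltaX N y z Y := by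
    intro X
    obtain ⟨f0, hf0⟩ := exists_isMaxFlow N y z
    have hne : {n : ℕ | ∃ f, IsMaxFlow N y z f ∧ (∑ x ∈ X, vertexFlow f y z x) = (n : ℤ)}.Nonempty := by
      refine ⟨(∑ x ∈ X, vertexFlow f0 y z x).toNat, f0, hf0, ?_⟩
      rw [Int.toNat_of_nonneg (Finset.sum_nonneg fun x _ => hvnonneg f0 hf0 x)]
    obtain ⟨f, hf, hsum⟩ := Nat.sInf_mem hne
    obtain ⟨γ, hlen, hpaths, hle⟩ := exists_pathSeq_of_flow hyz (maxFlowValue N y z) f hf.1 hf.2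
    have hps : IsPathSeq N y z γ := ⟨hpaths, fun u v => le_trans (hle u v) (hf.1.1 u v)⟩
    have hγmax : γ ∈ MaxSeqs N y z :=
      ⟨hps, by rw [hlen, maxFlow_eq_maxSeqLen N y z hyz]⟩
    have hlam : lambdaX N y z X ≤ lX X γ := Nat.sInf_le ⟨γ, hγmax, rfl⟩
    have hnd : ∀ p ∈ γ, p.Nodup := fun p hp => (hpaths p hp).2.1
    have hkey : (lX X γ : ℤ) ≤ ∑ x ∈ X, vertexFlow f y z x := by
      by_cases hXyz : ∃ x0 ∈ X, x0 = y ∨ x0 = z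
      · obtain ⟨x0, hx0X, hx0⟩ := hXyz
        have h1 : vertexFlow f y z x0 = (maxFlowValue N y z : ℤ) := by
          rw [vertexFlow, if_pos hx0, hf.2]
        have h2 : vertexFlow f y z x0 ≤ ∑ x ∈ X, vertexFlow f y z x :=
          Finset.single_le_sum (fun x _ => hvnonneg f hf x) hx0X
        have h3 : lX X γ ≤ γ.length := List.countP_le_length
        rw [hlen] at h3
        calc (lX X γ : ℤ) ≤ (maxFlowValue N y z : ℤ) := by exact_mod_cast h3
          _ = vertexFlow f y z x0 := h1.symm
          _ ≤ _ := h2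
      · push_neg at hXyz
        have hnat : lX X γ ≤ ∑ x ∈ X, ∑ u : V, seqFlow γ x u := by
          have e1 : ∑ x ∈ X, ∑ u : V, seqFlow γ x u =
              (γ.map fun p => ∑ x ∈ X, outdeg p x).sum := by
            rw [Finset.sum_congr rfl fun x _ => sum_seqFlow_out γ hnd x, sum_finset_listmap]
          rw [e1, lX, countP_eq_sum_map]
          apply List.sum_le_sum
          intro p hp
          by_cases hany : p.any fun x => decide (x ∈ X)
          · rw [if_pos hany]
            obtain ⟨x, hxp, hxX⟩ := by simpa using List.any_eq_true.1 hany
            have hout1 : outdeg p x = 1 := by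
              rw [outdeg_path (hpaths p hp) x (hXyz x hxX).2, if_pos hxp]
            calc 1 = outdeg p x := hout1.symm
              _ ≤ ∑ x ∈ X, outdeg p x := Finset.single_le_sum (fun _ _ => Nat.zero_le _) hxX
          · rw [if_neg hany]
            exact Nat.zero_le _
        have h2 : ∑ x ∈ X, ∑ u : V, seqFlow γ x u ≤ ∑ x ∈ X, ∑ u : V, f x u :=
          Finset.sum_le_sum fun x _ => Finset.sum_le_sum fun u _ => hle x u
        have h3 : ((∑ x ∈ X, ∑ u : V, f x u : ℕ) : ℤ) = ∑ x ∈ X, vertexFlow f y z x := by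
          rw [Nat.cast_sum]
          refine Finset.sum_congr rfl fun x hx => ?_
          rw [vertexFlow, if_neg (not_or.2 (hXyz x hx)), Nat.cast_sum]
        calc (lX X γ : ℤ) ≤ ((∑ x ∈ X, ∑ u : V, f x u : ℕ) : ℤ) := by
              exact_mod_cast le_trans hnat h2
          _ = _ := h3
    have hfin : lX X γ ≤ deltaX N y z X := by
      have : (lX X γ : ℤ) ≤ ((deltaX N y z X : ℕ) : ℤ) := by
        rw [deltaX]
        exact hkey.trans_eq hsum
      exact_mod_cast this
    exact le_trans hlam hfin
  refine ⟨main1 X, fun x hX => ?_⟩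
  subst hX
  refine le_antisymm ?_ (main1 {x})
  have hexγ : {n : ℕ | ∃ γ ∈ MaxSeqs N y z, lX {x} γ = n}.Nonempty := by
    obtain ⟨γ0, hγ0⟩ := exists_mem_maxSeqs N y z
    exact ⟨lX {x} γ0, γ0, hγ0, rfl⟩
  have hmem := Nat.sInf_mem hexγ
  obtain ⟨γ, hγ, hlXγ⟩ := hmem
  have hps := hγ.1
  have hnd : ∀ p ∈ γ, p.Nodup := fun p hp => (hps.1 p hp).2.1
  have hflow : IsFlow N y z (seqFlow γ) := isFlow_seqFlow hps
  have hval : flowValue (seqFlow γ) y = (maxFlowValue N y z : ℤ) := by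
    rw [flowValue_seqFlow hps, hγ.2, maxFlow_eq_maxSeqLen N y z hyz]
  have hmf : IsMaxFlow N y z (seqFlow γ) := ⟨hflow, hval⟩
  have hgoal : deltaX N y z {x} ≤ lX {x} γ := by
    by_cases hx : x = y ∨ x = z
    · have hvf : ∑ v ∈ ({x} : Finset V), vertexFlow (seqFlow γ) y z v = (γ.length : ℤ) := by
        rw [Finset.sum_singleton, vertexFlow, if_pos hx, flowValue_seqFlow hps]
      have hδ : deltaX N y z {x} ≤ γ.length := Nat.sInf_le ⟨seqFlow γ, hmf, hvf⟩
      have hlenX : lX {x} γ = γ.length := by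
        rw [lX, List.countP_eq_length]
        intro p hp
        simp only [List.any_eq_true, decide_eq_true_eq, Finset.mem_singleton]
        rcases hx with rfl | rfl
        · exact ⟨x, head_mem (hps.1 p hp).2.2.1, rfl⟩
        · exact ⟨x, last_mem (hps.1 p hp).2.2.2.1, rfl⟩
      rw [hlenX]
      exact hδ
    · push_neg at hx
      have hm : ∑ v ∈ ({x} : Finset V), vertexFlow (seqFlow γ) y z v =
          ((∑ u : V, seqFlow γ x u : ℕ) : ℤ) := by
        rw [Finset.sum_singleton, vertexFlow, if_neg (by tauto), Nat.cast_sum]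
      have hδ : deltaX N y z {x} ≤ ∑ u : V, seqFlow γ x u := Nat.sInf_le ⟨seqFlow γ, hmf, hm⟩
      have hle2 : ∑ u : V, seqFlow γ x u ≤ lX {x} γ := by
        rw [sum_seqFlow_out γ hnd x, lX, countP_eq_sum_map]
        apply List.sum_le_sum
        intro p hp
        rw [outdeg_eq p (hnd p hp)]
        by_cases hxp : x ∈ p.dropLast
        · rw [if_pos hxp, if_pos]
          simp only [List.any_eq_true, decide_eq_true_eq, Finset.mem_singleton]
          exact ⟨x, List.mem_of_mem_dropLast hxp, rfl⟩
        · rw [if_neg hxp]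
          exact Nat.zero_le _
      exact hδ.trans hle2
  rw [lambdaX, ← hlXγ]
  exact hgoal

end NetFlow

/-- `δ^N_{yz}(X) ≥ λ^N_{yz}(X)`, with equality when `X` is a singleton. -/
theorem delta_ge_lambda {V : Type*} [Fintype V] [DecidableEq V]
    (hV : 2 ≤ Fintype.card V) (N : Network V) (y z : V) (hyz : y ≠ z) (X : Finset V) :
    NetFlow.lambdaX N y z X ≤ NetFlow.deltaX N y z X ∧
      ∀ x : V, X = {x} → NetFlow.deltaX N y z X = NetFlow.lambdaX N y z X := by
  exact NetFlow.main_aux N y z hyz X
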